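/- Let X carry an action of the group of finitary permutations of an infinite type 𝔸 with decidable equality, and let x ∈ X. If (Aᵢ)_{i ∈ I} is a nonempty family of finite supports of x, then ⋂_{i ∈ I} Aᵢ is also a finite support of x. -/

import Mathlib

/-- The subgroup of finitary permutations of `𝔸`: permutations moving
only finitely many elements. -/
def FinPerm (𝔸 : Type*) : Subgroup (Equiv.Perm 𝔸) where
  carrier := {π : Equiv.Perm 𝔸 | {a | π a ≠ a}.Finite}
  one_mem' := by simp
  mul_mem' := by
    intro π σ hπ hσ
    refine (hπ.union hσ).subset ?_
    intro a ha
    by_contra h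
    simp only [Set.mem_union, Set.mem_setOf_eq, not_or, not_not] at h
    exact ha (by simp [Equiv.Perm.mul_apply, h.1, h.2])
  inv_mem' := by
    intro π hπ
    refine hπ.subset ?_
    intro a ha
    simp only [Set.mem_setOf_eq] at *
    intro h
    exact ha (by nth_rewrite 1 [← h]; exact Equiv.symm_apply_apply π a)

/-- `A` supports `x`: every finitary permutation fixing `A` pointwise fixes `x`. -/
def NSupports (𝔸 : Type*) {X : Type*} [MulAction (FinPerm 𝔸) X] (A : Set 𝔸) (x : X) : Prop :=
  ∀ π : FinPerm 𝔸, (∀ a ∈ A, π.1 a = a) → π • x = x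

section Aux
variable {𝔸 X : Type*} [Infinite 𝔸] [DecidableEq 𝔸] [MulAction (FinPerm 𝔸) X]

/-- A swap as a finitary permutation. -/
def finSwap (a b : 𝔸) : FinPerm 𝔸 :=
  ⟨Equiv.swap a b, by
    refine ((Set.finite_singleton b).insert a).subset ?_
    intro c hc
    simp only [Set.mem_setOf_eq] at hc
    by_contra h
    simp only [Set.mem_insert_iff, Set.mem_singleton_iff, not_or] at h
    exact hc (Equiv.swap_apply_of_ne_of_ne h.1 h.2)⟩

lemma smul_finSwap_of_not_mem {A : Set 𝔸} {x : X} (hA : NSupports 𝔸 A x)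
    {a b : 𝔸} (ha : a ∉ A) (hb : b ∉ A) : finSwap a b • x = x := by
  refine hA _ ?_
  intro c hc
  exact Equiv.swap_apply_of_ne_of_ne (fun h => ha (h ▸ hc)) (fun h => hb (h ▸ hc))

lemma swap_smul_inter {A B : Set 𝔸} {x : X} (hAf : A.Finite) (hBf : B.Finite)
    (hA : NSupports 𝔸 A x) (hB : NSupports 𝔸 B x)
    {a b : 𝔸} (ha : a ∉ A ∩ B) (hb : b ∉ A ∩ B) : finSwap a b • x = x := by
  -- helper: a ∉ A, b ∉ B
  have key : ∀ a b : 𝔸, a ∉ A → b ∉ B → finSwap a b • x = x := by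
    intro a b ha hb
    rcases eq_or_ne a b with rfl | hab
    · have : finSwap a a = 1 := by
        apply Subtype.ext; simp only [finSwap, Equiv.swap_self]; rfl
      rw [this, one_smul]
    -- fresh c
    obtain ⟨c, hc⟩ := ((hAf.union hBf).union ((Set.finite_singleton b).insert a)).infinite_compl.nonempty
    simp only [Set.mem_compl_iff, Set.mem_union, Set.mem_insert_iff, Set.mem_singleton_iff,
      not_or] at hc
    obtain ⟨⟨hcA, hcB⟩, hca, hcb⟩ := hc
    have hbc : b ≠ c := fun h => hcb h.symm
    have hdecomp : finSwap a b = finSwap a c * finSwap b c * finSwap a c := by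
      apply Subtype.ext
      show Equiv.swap a b = Equiv.swap a c * Equiv.swap b c * Equiv.swap a c
      have := Equiv.swap_mul_swap_mul_swap (x := b) (y := a) (z := c) hab.symm hbc
      rw [Equiv.swap_comm b a] at this
      rw [Equiv.swap_comm b c, ← this]
      simp [← mul_assoc, Equiv.swap_mul_self, Equiv.swap_mul_self_mul]
    rw [hdecomp, mul_smul, mul_smul, smul_finSwap_of_not_mem hA ha hcA,
      smul_finSwap_of_not_mem hB hb hcB, smul_finSwap_of_not_mem hA ha hcA]
  rcases (by tauto : a ∉ A ∨ a ∉ B) with haA | haB <;>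
    rcases (by tauto : b ∉ A ∨ b ∉ B) with hbA | hbB
  · exact smul_finSwap_of_not_mem hA haA hbA
  · exact key a b haA hbB
  · have : finSwap a b = finSwap b a := by
      apply Subtype.ext; exact Equiv.swap_comm a b
    rw [this]; exact key b a hbA haB
  · exact smul_finSwap_of_not_mem hB haB hbB

/-- Binary intersection of finite supports is a support. -/
lemma inter_supports {A B : Set 𝔸} {x : X} (hAf : A.Finite) (hBf : B.Finite)
    (hA : NSupports 𝔸 A x) (hB : NSupports 𝔸 B x) : NSupports 𝔸 (A ∩ B) x := by
  have main : ∀ n : ℕ, ∀ π : FinPerm 𝔸, {a | π.1 a ≠ a}.ncard ≤ n →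
      (∀ a ∈ A ∩ B, π.1 a = a) → π • x = x := by
    intro n
    induction n with
    | zero =>
      intro π hcard _
      have hfin : {a | π.1 a ≠ a}.Finite := π.2
      have : {a | π.1 a ≠ a} = ∅ := by
        rw [← Set.ncard_eq_zero hfin]; omega
      have hπ1 : π = 1 := by
        apply Subtype.ext; ext a
        by_contra h
        exact (Set.eq_empty_iff_forall_notMem.mp this a) h
      rw [hπ1, one_smul]
    | succ n ih =>
      intro π hcard hfix
      have hfinπ : {a | π.1 a ≠ a}.Finite := π.2
      by_cases hne : {a | π.1 a ≠ a} = ∅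
      · have hπ1 : π = 1 := by
          apply Subtype.ext; ext a
          by_contra h
          exact (Set.eq_empty_iff_forall_notMem.mp hne a) h
        rw [hπ1, one_smul]
      obtain ⟨a, ha⟩ := Set.nonempty_iff_ne_empty.mpr hne
      have hπa : π.1 a ≠ a := ha
      set b := π.1 a with hb
      have hbsupp : b ∈ {a | π.1 a ≠ a} := by
        simp only [Set.mem_setOf_eq]
        intro h
        exact hπa (π.1.injective (h.trans hb))
      set π' : FinPerm 𝔸 := finSwap a b * π with hπ'
      have hπeq : π = finSwap a b * π' := by
        rw [hπ', ← mul_assoc]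
        have : finSwap a b * finSwap a b = 1 := by
          apply Subtype.ext
          exact Equiv.swap_mul_self a b
        rw [this, one_mul]
      have hca' : Equiv.swap a b b = a := by rw [Equiv.swap_apply_right]
      have hsub : {c | π'.1 c ≠ c} ⊆ {c | π.1 c ≠ c} \ {a} := by
        intro c hc
        have hc' : Equiv.swap a b (π.1 c) ≠ c := hc
        have hca : c ≠ a := by
          intro h; subst h
          exact hc' (by rw [← hb, Equiv.swap_apply_right])
        refine ⟨?_, hca⟩
        intro h
        rw [h] at hc'
        rcases eq_or_ne c b with h2 | h2
        · exact hbsupp (h2 ▸ h)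
        exact hc' (Equiv.swap_apply_of_ne_of_ne hca h2)
      have hcard' : {c | π'.1 c ≠ c}.ncard ≤ n := by
        have h1 : {c | π'.1 c ≠ c}.ncard ≤ ({c | π.1 c ≠ c} \ {a}).ncard :=
          Set.ncard_le_ncard hsub (hfinπ.diff)
        have h2 : ({c | π.1 c ≠ c} \ {a}).ncard = {c | π.1 c ≠ c}.ncard - 1 :=
          Set.ncard_diff_singleton_of_mem ha
        have h3 : 0 < {c | π.1 c ≠ c}.ncard := (Set.ncard_pos hfinπ).mpr ⟨a, ha⟩
        omega
      have haAB : a ∉ A ∩ B := fun h => ha (hfix a h)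
      have hbAB : b ∉ A ∩ B := fun h => hbsupp (hfix b h)
      have hfix' : ∀ c ∈ A ∩ B, π'.1 c = c := by
        intro c hc
        show Equiv.swap a b (π.1 c) = c
        rw [hfix c hc]
        exact Equiv.swap_apply_of_ne_of_ne (fun h => haAB (h ▸ hc)) (fun h => hbAB (h ▸ hc))
      rw [hπeq, mul_smul, ih π' hcard' hfix',
        swap_smul_inter hAf hBf hA hB haAB hbAB]
  intro π hfix
  exact main {a | π.1 a ≠ a}.ncard π le_rfl hfix

end Aux

theorem stmt_2 {𝔸 X : Type*} [Infinite 𝔸] [DecidableEq 𝔸] [MulAction (FinPerm 𝔸) X]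
    (x : X) {I : Type*} [Nonempty I] (A : I → Set 𝔸)
    (hfin : ∀ i, (A i).Finite) (hsupp : ∀ i, NSupports 𝔸 (A i) x) :
    (⋂ i, A i).Finite ∧ NSupports 𝔸 (⋂ i, A i) x := by
  obtain ⟨i₀⟩ := ‹Nonempty I›
  have hIfin : (⋂ i, A i).Finite := (hfin i₀).subset (Set.iInter_subset A i₀)
  refine ⟨hIfin, ?_⟩
  -- Good finsets: finite supports containing the intersection
  set Good : Finset 𝔸 → Prop := fun B => NSupports 𝔸 (↑B) x ∧ (⋂ i, A i) ⊆ ↑B with hGood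
  have hex : ∃ n, ∃ B : Finset 𝔸, B.card = n ∧ Good B := by
    refine ⟨(hfin i₀).toFinset.card, (hfin i₀).toFinset, rfl, ?_, ?_⟩
    · have : ((hfin i₀).toFinset : Set 𝔸) = A i₀ := (hfin i₀).coe_toFinset
      rw [this]; exact hsupp i₀
    · rw [(hfin i₀).coe_toFinset]; exact Set.iInter_subset A i₀
  classical
  obtain ⟨B, hBcard, hBsupp, hBsub⟩ := Nat.find_spec hex
  have hmin : ∀ B' : Finset 𝔸, Good B' → Nat.find hex ≤ B'.card := fun B' h =>
    Nat.find_min' hex ⟨B', rfl, h⟩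
  have hBeq : (↑B : Set 𝔸) = ⋂ i, A i := by
    apply Set.Subset.antisymm _ hBsub
    rw [Set.subset_iInter_iff]
    intro i
    -- B ∩ A i is Good with card ≤ card B, so = B by minimality
    set B' : Finset 𝔸 := B ∩ (hfin i).toFinset with hB'
    have hB'coe : (↑B' : Set 𝔸) = ↑B ∩ A i := by
      rw [hB']; push_cast; rw [(hfin i).coe_toFinset]
    have hB'good : Good B' := by
      constructor
      · rw [hB'coe]
        exact inter_supports B.finite_toSet (hfin i) hBsupp (hsupp i)
      · rw [hB'coe]
        exact Set.subset_inter hBsub (Set.iInter_subset A i)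
    have hle : B'.card ≤ B.card := Finset.card_le_card (Finset.inter_subset_left)
    have hge : B.card ≤ B'.card := hBcard ▸ hmin B' hB'good
    have : B' = B := Finset.eq_of_subset_of_card_le Finset.inter_subset_left hge
    intro a haB
    have : a ∈ B' := this ▸ haB
    rw [← (hfin i).coe_toFinset]
    exact_mod_cast (Finset.mem_inter.mp this).2
  rw [← hBeq]
  exact hBsupp
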